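/- Let Ω be an open subset of ℝⁿ and let f : ℝⁿ → ℝ be differentiable at every point of Ω. Then the supremum over Ω of ‖∇f‖ equals the essential supremum of ‖∇f‖ over Ω with respect to Lebesgue measure on ℝⁿ. -/

import Mathlib

open MeasureTheory ENNReal NNReal
open Set

lemma abs_sub_le_of_ae_deriv_le {φ : ℝ → ℝ} {C : ℝ} (hC0 : 0 ≤ C) {a b : ℝ} (hab : a ≤ b)
    (hφ : ∀ t ∈ Set.Icc a b, HasDerivAt φ (deriv φ t) t)
    (hbd : ∀ᵐ t, t ∈ Set.Icc a b → |deriv φ t| ≤ C) :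
    |φ b - φ a| ≤ C * (b - a) := by
  have contφ : ContinuousOn φ (Icc a b) := fun t ht => (hφ t ht).continuousAt.continuousWithinAt
  -- lower bound for the measure of the image
  have himg : ENNReal.ofReal |φ b - φ a| ≤ volume (φ '' Icc a b) := by
    rcases le_total (φ a) (φ b) with h | h
    · calc ENNReal.ofReal |φ b - φ a| = volume (Icc (φ a) (φ b)) := by
            rw [Real.volume_Icc, abs_of_nonneg (by linarith)]
          _ ≤ volume (φ '' Icc a b) := measure_mono (intermediate_value_Icc hab contφ)
    · calc ENNReal.ofReal |φ b - φ a| = volume (Icc (φ b) (φ a)) := by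
            rw [Real.volume_Icc, abs_of_nonpos (by linarith)]
            congr 1; ring
          _ ≤ volume (φ '' Icc a b) := measure_mono (intermediate_value_Icc' hab contφ)
  -- upper bound
  set E : Set ℝ := Icc a b ∩ {t | |deriv φ t| ≤ C} with hE
  have measE : MeasurableSet E :=
    measurableSet_Icc.inter (measurableSet_le (measurable_deriv φ).abs measurable_const)
  set N : Set ℝ := Icc a b \ E with hN
  have measN : MeasurableSet N := measurableSet_Icc.diff measE
  have hN0 : volume N = 0 := by
    rw [← nonpos_iff_eq_zero]
    refine le_trans (measure_mono ?_) (le_of_eq hbd)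
    intro t ht
    simp only [mem_ae_iff] at *
    exact fun h => ht.2 ⟨ht.1, h ht.1⟩
  have hEimg : volume (φ '' E) ≤ ENNReal.ofReal C * ENNReal.ofReal (b - a) := by
    have := MeasureTheory.addHaar_image_le_lintegral_abs_det_fderiv (volume : Measure ℝ) measE
      (f' := fun t => (1 : ℝ →L[ℝ] ℝ).smulRight (deriv φ t))
      (fun t ht => ((hφ t ht.1).hasFDerivAt).hasFDerivWithinAt)
    refine this.trans ?_
    calc ∫⁻ t in E, ENNReal.ofReal |((1 : ℝ →L[ℝ] ℝ).smulRight (deriv φ t)).det|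
          ≤ ∫⁻ _ in E, ENNReal.ofReal C := by
            refine setLIntegral_mono measurable_const (fun t ht => ?_)
            rw [ContinuousLinearMap.smulRight_one_eq_toSpanSingleton, ContinuousLinearMap.det_toSpanSingleton]
            exact ENNReal.ofReal_le_ofReal ht.2
        _ = ENNReal.ofReal C * volume E := setLIntegral_const E _
        _ ≤ ENNReal.ofReal C * ENNReal.ofReal (b - a) := by
            refine mul_le_mul_right ?_ _
            refine le_trans (measure_mono (inter_subset_left)) ?_
            rw [Real.volume_Icc]
  have hNimg : volume (φ '' N) = 0 := by
    rw [← nonpos_iff_eq_zero]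
    have := MeasureTheory.addHaar_image_le_lintegral_abs_det_fderiv (volume : Measure ℝ) measN
      (f' := fun t => (1 : ℝ →L[ℝ] ℝ).smulRight (deriv φ t))
      (fun t ht => ((hφ t ht.1).hasFDerivAt).hasFDerivWithinAt)
    refine this.trans (le_of_eq ?_)
    rw [setLIntegral_measure_zero _ _ hN0]
  have : volume (φ '' Icc a b) ≤ ENNReal.ofReal C * ENNReal.ofReal (b - a) := by
    have hsub : φ '' Icc a b ⊆ φ '' E ∪ φ '' N := by
      rw [← image_union]
      exact image_mono (f := φ) (fun t ht => by
        by_cases h : t ∈ E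
        · exact Or.inl h
        · exact Or.inr ⟨ht, h⟩)
    calc volume (φ '' Icc a b) ≤ volume (φ '' E ∪ φ '' N) := measure_mono hsub
      _ ≤ volume (φ '' E) + volume (φ '' N) := measure_union_le _ _
      _ ≤ ENNReal.ofReal C * ENNReal.ofReal (b - a) + 0 := add_le_add hEimg (le_of_eq hNimg)
      _ = ENNReal.ofReal C * ENNReal.ofReal (b - a) := add_zero _
  have hfin : ENNReal.ofReal |φ b - φ a| ≤ ENNReal.ofReal (C * (b - a)) := by
    rw [ENNReal.ofReal_mul hC0]
    exact himg.trans this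
  exact (ENNReal.ofReal_le_ofReal_iff (by nlinarith)).mp hfin

lemma norm_fderiv_le_of_ae_le {n : ℕ} {Ω : Set (EuclideanSpace ℝ (Fin n))} (hΩ : IsOpen Ω)
    {f : EuclideanSpace ℝ (Fin n) → ℝ} (hdiff : ∀ x ∈ Ω, DifferentiableAt ℝ f x)
    {C : ℝ≥0} (hae : ∀ᵐ x, x ∈ Ω → ‖fderiv ℝ f x‖₊ ≤ C)
    {x₀ : EuclideanSpace ℝ (Fin n)} (hx₀ : x₀ ∈ Ω) : ‖fderiv ℝ f x₀‖ ≤ C := by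
  obtain ⟨ε, hε, hball⟩ := Metric.isOpen_iff.mp hΩ x₀ hx₀
  set r := ε / 2 with hr
  have hr0 : 0 < r := by positivity
  -- the bad set
  set Z : Set (EuclideanSpace ℝ (Fin n)) := {x | x ∈ Ω ∧ ¬(‖fderiv ℝ f x‖₊ ≤ C)} with hZ
  have hZm : MeasurableSet Z :=
    hΩ.measurableSet.inter
      (measurableSet_le (measurable_fderiv ℝ f).nnnorm measurable_const).compl
  have hZ0 : volume Z = 0 := by
    rw [← nonpos_iff_eq_zero]
    refine le_trans (measure_mono ?_) (le_of_eq hae)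
    intro x hx
    simp only [mem_ae_iff] at *
    exact fun h => hx.2 (h hx.1)
  -- main pointwise estimate near x₀
  have main : ∀ b ∈ Metric.ball x₀ r, ‖f b - f x₀‖ ≤ C * ‖b - x₀‖ := by
    intro b hb
    rcases eq_or_ne b x₀ with rfl | hne
    · simp
    set L : ℝ := ‖b - x₀‖ with hL
    have hL0 : 0 < L := by simpa [hL] using sub_ne_zero_of_ne hne
    set v : EuclideanSpace ℝ (Fin n) := L⁻¹ • (b - x₀) with hv
    have hvnorm : ‖v‖ = 1 := by
      rw [hv, norm_smul, norm_inv, Real.norm_eq_abs, abs_of_pos hL0, ← hL, inv_mul_cancel₀ hL0.ne']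
    have hLv : L • v = b - x₀ := smul_inv_smul₀ hL0.ne' _
    -- slicing via Fubini
    have hS : ((volume : Measure ℝ).prod (volume : Measure (EuclideanSpace ℝ (Fin n))))
        {p : ℝ × EuclideanSpace ℝ (Fin n) | p.2 + p.1 • v ∈ Z} = 0 := by
      have hSm : MeasurableSet {p : ℝ × EuclideanSpace ℝ (Fin n) | p.2 + p.1 • v ∈ Z} :=
        (continuous_snd.add (continuous_fst.smul continuous_const)).measurable hZm
      rw [Measure.measure_prod_null hSm]
      refine Filter.Eventually.of_forall fun t => ?_
      simp only [Pi.zero_apply]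
      show volume ((fun w => w + t • v) ⁻¹' Z) = 0
      rw [measure_preimage_add_right, hZ0]
    have hS2 : ((volume : Measure (EuclideanSpace ℝ (Fin n))).prod (volume : Measure ℝ))
        {p : EuclideanSpace ℝ (Fin n) × ℝ | p.1 + p.2 • v ∈ Z} = 0 := by
      have hSm2 : MeasurableSet {p : EuclideanSpace ℝ (Fin n) × ℝ | p.1 + p.2 • v ∈ Z} :=
        (continuous_fst.add (continuous_snd.smul continuous_const)).measurable hZm
      rw [← Measure.prod_swap, Measure.map_apply measurable_swap hSm2]
      exact hS
    have hslice := Measure.measure_ae_null_of_prod_null hS2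
    -- good offsets
    have good : ∀ w : EuclideanSpace ℝ (Fin n), ‖w - x₀‖ < r →
        volume {t : ℝ | w + t • v ∈ Z} = 0 →
        |f (w + (b - x₀)) - f w| ≤ (C : ℝ) * L := by
      intro w hw hwslice
      have hmem : ∀ t ∈ Icc (0:ℝ) L, w + t • v ∈ Ω := by
        intro t ht
        apply hball
        simp only [Metric.mem_ball, dist_eq_norm]
        have h1 : ‖w + t • v - x₀‖ ≤ ‖w - x₀‖ + ‖t • v‖ := by
          rw [show w + t • v - x₀ = (w - x₀) + t • v from by abel]
          exact norm_add_le _ _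
        have h2 : ‖t • v‖ = t := by
          rw [norm_smul, hvnorm, Real.norm_eq_abs, abs_of_nonneg ht.1, mul_one]
        have hLr : L < r := by simpa [hL, dist_eq_norm] using hb
        have := ht.2
        rw [h2] at h1
        have hrε : r = ε / 2 := hr
        linarith
      set φ : ℝ → ℝ := fun t => f (w + t • v) with hφdef
      have hder : ∀ t ∈ Icc (0:ℝ) L, HasDerivAt φ ((fderiv ℝ f (w + t • v)) v) t := by
        intro t ht
        have hcurve : HasDerivAt (fun t : ℝ => w + t • v) v t := by
          simpa using ((hasDerivAt_id t).smul_const v).const_add w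
        exact ((hdiff _ (hmem t ht)).hasFDerivAt.comp_hasDerivAt t hcurve)
      have hφ : ∀ t ∈ Icc (0:ℝ) L, HasDerivAt φ (deriv φ t) t := by
        intro t ht
        rw [(hder t ht).deriv]
        exact hder t ht
      have hbd : ∀ᵐ t, t ∈ Icc (0:ℝ) L → |deriv φ t| ≤ (C : ℝ) := by
        have hnm : ∀ᵐ t : ℝ, w + t • v ∉ Z := by
          rw [ae_iff]
          simpa using hwslice
        filter_upwards [hnm] with t hnt ht
        rw [(hder t ht).deriv]
        have hxt : w + t • v ∈ Ω := hmem t ht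
        have hbound : ‖fderiv ℝ f (w + t • v)‖ ≤ C := by
          by_contra h
          exact hnt ⟨hxt, fun hle => h (by exact_mod_cast hle)⟩
        calc |(fderiv ℝ f (w + t • v)) v| ≤ ‖fderiv ℝ f (w + t • v)‖ * ‖v‖ :=
              (fderiv ℝ f (w + t • v)).le_opNorm v
          _ = ‖fderiv ℝ f (w + t • v)‖ := by rw [hvnorm, mul_one]
          _ ≤ C := hbound
      have := abs_sub_le_of_ae_deriv_le (C := (C : ℝ)) C.coe_nonneg hL0.le hφ hbd
      simpa [hφdef, hLv] using this
    -- a.e. offsets are good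
    have hG : ∀ᵐ w : EuclideanSpace ℝ (Fin n), volume {t : ℝ | w + t • v ∈ Z} = 0 := by
      filter_upwards [hslice] with w hw
      simpa using hw
    -- choose a sequence of good offsets converging to x₀
    have hexists : ∀ k : ℕ, ∃ w : EuclideanSpace ℝ (Fin n),
        ‖w - x₀‖ < min r (1 / ((k : ℝ) + 1)) ∧
          |f (w + (b - x₀)) - f w| ≤ (C : ℝ) * L := by
      intro k
      have hδ : 0 < min r (1 / ((k : ℝ) + 1)) := lt_min hr0 (by positivity)
      have hpos := (Metric.measure_ball_pos volume x₀ hδ).ne'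
      have hmeets : ∃ w ∈ Metric.ball x₀ (min r (1 / ((k : ℝ) + 1))),
          volume {t : ℝ | w + t • v ∈ Z} = 0 := by
        by_contra hcon
        push_neg at hcon
        have hsub : Metric.ball x₀ (min r (1 / ((k : ℝ) + 1)))
            ⊆ {w | ¬ volume {t : ℝ | w + t • v ∈ Z} = 0} := fun w hw => hcon w hw
        exact hpos (measure_mono_null hsub (ae_iff.mp hG))
      obtain ⟨w, hw1, hw2⟩ := hmeets
      have hw1' : ‖w - x₀‖ < min r (1 / ((k : ℝ) + 1)) := by
        simpa [dist_eq_norm] using hw1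
      exact ⟨w, hw1', good w (hw1'.trans_le (min_le_left _ _)) hw2⟩
    choose w hw1 hw2 using hexists
    have hwten : Filter.Tendsto w Filter.atTop (nhds x₀) := by
      rw [tendsto_iff_norm_sub_tendsto_zero]
      refine squeeze_zero (fun k => norm_nonneg _)
        (fun k => ((hw1 k).trans_le (min_le_right _ _)).le) ?_
      exact tendsto_one_div_add_atTop_nhds_zero_nat
    have hbΩ : b ∈ Ω := hball (Metric.ball_subset_ball (by rw [hr]; linarith) hb)
    have ht1 : Filter.Tendsto (fun k => f (w k + (b - x₀))) Filter.atTop (nhds (f b)) := by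
      have h : Filter.Tendsto (fun k => w k + (b - x₀)) Filter.atTop (nhds (x₀ + (b - x₀))) :=
        hwten.add tendsto_const_nhds
      rw [show x₀ + (b - x₀) = b from by abel] at h
      exact (hdiff b hbΩ).continuousAt.tendsto.comp h
    have ht2 : Filter.Tendsto (fun k => f (w k)) Filter.atTop (nhds (f x₀)) :=
      (hdiff x₀ hx₀).continuousAt.tendsto.comp hwten
    have hten : Filter.Tendsto (fun k => |f (w k + (b - x₀)) - f (w k)|) Filter.atTop
        (nhds |f b - f x₀|) := (ht1.sub ht2).abs
    have hfinal := le_of_tendsto hten (Filter.Eventually.of_forall hw2)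
    simpa [Real.norm_eq_abs, hL] using hfinal
  refine (hdiff x₀ hx₀).hasFDerivAt.le_of_lip' C.coe_nonneg ?_
  filter_upwards [Metric.ball_mem_nhds x₀ hr0] with y hy
  exact main y hy

/-- If `f : ℝⁿ → ℝ` is differentiable at every point of an open set `Ω`, then the pointwise
supremum of `‖∇f‖` over `Ω` equals the essential supremum of `‖∇f‖` over `Ω` with respect to
Lebesgue measure, both interpreted in `[0, ∞]`. -/
theorem stmt_7 {n : ℕ} (Ω : Set (EuclideanSpace ℝ (Fin n))) (hΩ : IsOpen Ω)
    (f : EuclideanSpace ℝ (Fin n) → ℝ)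
    (hdiff : ∀ x ∈ Ω, DifferentiableAt ℝ f x) :
    (⨆ x ∈ Ω, (‖fderiv ℝ f x‖₊ : ℝ≥0∞)) =
      essSup (fun x => (‖fderiv ℝ f x‖₊ : ℝ≥0∞)) (volume.restrict Ω) := by
  refine le_antisymm ?_ ?_
  · refine iSup₂_le fun x hx => ?_
    set M := essSup (fun x => (‖fderiv ℝ f x‖₊ : ℝ≥0∞)) (volume.restrict Ω) with hM
    rcases eq_or_ne M ⊤ with hMtop | hMtop
    · rw [hMtop]; exact le_top
    set C : ℝ≥0 := M.toNNReal with hC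
    have hCM : (C : ℝ≥0∞) = M := ENNReal.coe_toNNReal hMtop
    have haes : ∀ᵐ y ∂(volume.restrict Ω), (‖fderiv ℝ f y‖₊ : ℝ≥0∞) ≤ M :=
      ENNReal.ae_le_essSup _
    have hae : ∀ᵐ y, y ∈ Ω → ‖fderiv ℝ f y‖₊ ≤ C := by
      have := (ae_restrict_iff' hΩ.measurableSet).mp haes
      filter_upwards [this] with y hy hyΩ
      have := hy hyΩ
      rw [← hCM] at this
      exact_mod_cast this
    have key := norm_fderiv_le_of_ae_le hΩ hdiff hae hx
    have : ‖fderiv ℝ f x‖₊ ≤ C := by exact_mod_cast key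
    calc (‖fderiv ℝ f x‖₊ : ℝ≥0∞) ≤ (C : ℝ≥0∞) := by exact_mod_cast this
      _ = M := hCM
  · refine essSup_le_of_ae_le _ ?_
    filter_upwards [ae_restrict_mem hΩ.measurableSet] with x hx
    exact le_iSup₂ (f := fun x (_ : x ∈ Ω) => (‖fderiv ℝ f x‖₊ : ℝ≥0∞)) x hx
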